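/- arXiv:1807.00384 — 8 statements merged into one kernel-verified Lean document; each statement's English description precedes it below -/
import Mathlib

section
/- A subgroup H of a finite group G is pronormal in G if and only if for every transitive action of G on a finite set, the normalizer N_G(H) acts transitively on the set of fixed points of H. -/
open Pointwise

/-- `H` is pronormal in `G`: for every `g`, `H` and `H^g` are conjugate in `⟨H, H^g⟩`. -/
def Pronormal {G : Type*} [Group G] (H : Subgroup G) : Prop :=
  ∀ g : G, ∃ k ∈ (H ⊔ MulAut.conj g • H : Subgroup G),
    MulAut.conj k • H = MulAut.conj g • H

lemma mem_conj_smul_iff {G : Type*} [Group G] (H : Subgroup G) (g x : G) :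
    x ∈ MulAut.conj g • H ↔ g⁻¹ * x * g ∈ H := by
  rw [Subgroup.mem_pointwise_smul_iff_inv_smul_mem]
  simp [mul_assoc]

lemma conj_smul_eq_iff_mem_normalizer {G : Type*} [Group G] (H : Subgroup G) (n : G) :
    MulAut.conj n • H = H ↔ n ∈ Subgroup.normalizer (H : Set G) := by
  rw [Subgroup.mem_normalizer_iff'', SetLike.ext_iff]
  simp only [mem_conj_smul_iff]
  exact ⟨fun h x => (h x).symm, fun h x => (h x).symm⟩

theorem pronormal_iff_normalizer_transitive_on_fixedPoints
    {G : Type*} [Group G] [Finite G] (H : Subgroup G) :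
    Pronormal H ↔
      ∀ (Ω : Type) [Finite Ω] [MulAction G Ω], MulAction.IsPretransitive G Ω →
        ∀ ω₁ ω₂ : Ω, (∀ h ∈ H, h • ω₁ = ω₁) → (∀ h ∈ H, h • ω₂ = ω₂) →
          ∃ n ∈ Subgroup.normalizer (H : Set G), n • ω₁ = ω₂ := by
  constructor
  · intro hpro Ω _ _ htrans ω₁ ω₂ h1 h2
    obtain ⟨g, hg⟩ := htrans.exists_smul_eq ω₁ ω₂
    obtain ⟨k, hkmem, hkconj⟩ := hpro g
    -- the subgroup H ⊔ conj g • H fixes ω₂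
    have hfix : (H ⊔ MulAut.conj g • H : Subgroup G) ≤ MulAction.stabilizer G ω₂ := by
      apply sup_le
      · intro h hh
        simpa [MulAction.mem_stabilizer_iff] using h2 h hh
      · intro x hx
        rw [mem_conj_smul_iff] at hx
        have hx' : x = g * (g⁻¹ * x * g) * g⁻¹ := by group
        rw [MulAction.mem_stabilizer_iff, hx', mul_smul, mul_smul, ← hg,
          inv_smul_smul, h1 _ hx, hg]
    refine ⟨k⁻¹ * g, ?_, ?_⟩
    · rw [← conj_smul_eq_iff_mem_normalizer, map_mul, mul_smul, ← hkconj, map_inv,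
        inv_smul_smul]
    · have hk2 : k • ω₂ = ω₂ := hfix hkmem
      rw [mul_smul, hg, inv_smul_eq_iff, hk2]
  · intro hyp g
    set K : Subgroup G := H ⊔ MulAut.conj g • H with hK
    obtain ⟨m, ⟨e⟩⟩ := Finite.exists_equiv_fin (G ⧸ K)
    letI : MulAction G (Fin m) := e.symm.mulAction G
    have smul_def : ∀ (x : G) (ω : Fin m), x • ω = e.symm.symm (x • e.symm ω) :=
      fun _ _ => rfl
    have htrans : MulAction.IsPretransitive G (Fin m) := by
      constructor
      intro x y
      obtain ⟨a, ha⟩ := MulAction.exists_smul_eq G (e.symm x) (e.symm y)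
      exact ⟨a, by rw [smul_def, ha]; simp⟩
    have key : ∀ (h x : G), x⁻¹ * h * x ∈ K →
        h • e ((x : G ⧸ K)) = e ((x : G ⧸ K)) := by
      intro h x hx
      rw [smul_def, Equiv.symm_apply_apply, Equiv.symm_symm, e.apply_eq_iff_eq,
        MulAction.Quotient.smul_mk, QuotientGroup.eq]
      simpa [mul_assoc] using K.inv_mem hx
    have h1 : ∀ h ∈ H, h • e (((1 : G) : G ⧸ K)) = e (((1 : G) : G ⧸ K)) := by
      intro h hh
      exact key h 1 (by simpa using Subgroup.mem_sup_left hh)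
    have h2 : ∀ h ∈ H, h • e (((g⁻¹ : G) : G ⧸ K)) = e (((g⁻¹ : G) : G ⧸ K)) := by
      intro h hh
      refine key h g⁻¹ ?_
      have : g * h * g⁻¹ ∈ MulAut.conj g • H := by
        rw [mem_conj_smul_iff]
        simpa [mul_assoc] using hh
      simpa [mul_assoc] using Subgroup.mem_sup_right this
    obtain ⟨n, hn, hne⟩ := hyp (Fin m) htrans _ _ h1 h2
    rw [smul_def, Equiv.symm_apply_apply, Equiv.symm_symm, e.apply_eq_iff_eq,
      MulAction.Quotient.smul_mk, QuotientGroup.eq] at hne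
    refine ⟨g * n, ?_, ?_⟩
    ·
      have : (g * n)⁻¹ ∈ K := by simpa [mul_assoc] using hne
      exact K.inv_mem_iff.mp this
    · rw [map_mul, mul_smul, conj_smul_eq_iff_mem_normalizer _ n |>.mpr hn]
end

section
/- Let G be a finite group, A a normal subgroup of G, and H a subgroup of A. Then H is pronormal in G if and only if H is pronormal in A and the G-conjugacy class of H equals the A-conjugacy class of H (i.e., H^A = H^G as sets of subgroups). -/
open Pointwise

theorem pronormal_iff_pronormal_in_normal_and_conjClasses_eq
    {G : Type*} [Group G] [Finite G] (A : Subgroup G) [A.Normal]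
    (H : Subgroup G) (hHA : H ≤ A) :
    Pronormal H ↔ Pronormal (H.subgroupOf A) ∧
      ∀ g : G, ∃ a ∈ A, MulAut.conj a • H = MulAut.conj g • H := by
  have key : ∀ a : A, MulAut.conj a • H.subgroupOf A
      = (MulAut.conj (a : G) • H).subgroupOf A := by
    intro a
    ext x
    simp only [Subgroup.mem_pointwise_smul_iff_inv_smul_mem, Subgroup.mem_subgroupOf,
      MulAut.smul_def, MulAut.conj_inv_apply]
    rfl
  have hle : ∀ g : G, MulAut.conj g • H ≤ A := fun g x hx => by
    rw [Subgroup.mem_pointwise_smul_iff_inv_smul_mem] at hx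
    have h1 : g⁻¹ * x * g ∈ A := hHA (by simpa using hx)
    have h2 := Subgroup.Normal.conj_mem ‹A.Normal› _ h1 g
    simpa [mul_assoc] using h2
  constructor
  · intro hp
    constructor
    · intro a
      obtain ⟨k, hk, hkH⟩ := hp (a : G)
      have hkA : k ∈ A := (sup_le hHA (hle a)) hk
      refine ⟨⟨k, hkA⟩, ?_, ?_⟩
      · rw [key, ← Subgroup.subgroupOf_sup hHA (hle a)]
        exact hk
      · rw [key, key, hkH]
    · intro g
      obtain ⟨k, hk, hkH⟩ := hp g
      exact ⟨k, (sup_le hHA (hle g)) hk, hkH⟩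
  · rintro ⟨hp, hc⟩ g
    obtain ⟨a, haA, ha⟩ := hc g
    obtain ⟨k, hk, hkH⟩ := hp ⟨a, haA⟩
    rw [key, ← Subgroup.subgroupOf_sup hHA (hle a)] at hk
    rw [key, key] at hkH
    refine ⟨(k : G), ?_, ?_⟩
    · rw [← ha]; exact hk
    · have h3 := Subgroup.subgroupOf_inj.mp hkH
      rw [inf_of_le_left (hle (k : G)), inf_of_le_left (hle a)] at h3
      rw [h3, ha]
end

section
/- Let G be a finite group and H a subgroup containing a Sylow p-subgroup S of G. Then H is pronormal in G if and only if for every g ∈ N_G(S), the subgroups H and H^g are conjugate in ⟨H, H^g⟩. -/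
open Pointwise

theorem pronormal_iff_conjugate_for_normalizer_of_sylow
    {G : Type*} [Group G] [Finite G] {p : ℕ} (hp : p.Prime)
    (S : Sylow p G) (H : Subgroup G) (hSH : (S : Subgroup G) ≤ H) :
    Pronormal H ↔
      ∀ g ∈ Subgroup.normalizer ((S : Subgroup G) : Set G),
        ∃ k ∈ (H ⊔ MulAut.conj g • H : Subgroup G),
          MulAut.conj k • H = MulAut.conj g • H := by
  haveI : Fact p.Prime := ⟨hp⟩
  constructor
  · exact fun h g _ => h g
  · intro h g
    set M : Subgroup G := H ⊔ MulAut.conj g • H with hM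
    have hHM : H ≤ M := le_sup_left
    have hgHM : MulAut.conj g • H ≤ M := le_sup_right
    have hSM : (S : Subgroup G) ≤ M := hSH.trans hHM
    have hgSM : ((g • S : Sylow p G) : Subgroup G) ≤ M := by
      have : ((g • S : Sylow p G) : Subgroup G) = MulAut.conj g • (S : Subgroup G) := rfl
      rw [this]
      exact hgHM.trans' (Subgroup.pointwise_smul_le_pointwise_smul_iff.mpr hSH)
    -- Sylow subgroups of M
    obtain ⟨x, hx⟩ := MulAction.exists_smul_eq (↥M) ((g • S).subtype hgSM) (S.subtype hSM)
    rw [Sylow.smul_subtype] at hx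
    have hxgS : ((x : G) * g) • S = S := by
      have h2 : (x : G) • g • S = S := Sylow.subtype_injective hx
      rwa [smul_smul] at h2
    have hn : (x : G) * g ∈ Subgroup.normalizer ((S : Subgroup G) : Set G) :=
      Sylow.smul_eq_iff_mem_normalizer.mp hxgS
    obtain ⟨k, hkmem, hk⟩ := h ((x : G) * g) hn
    refine ⟨(x : G)⁻¹ * k, ?_, ?_⟩
    · have hsub : H ⊔ MulAut.conj ((x : G) * g) • H ≤ M := by
        refine sup_le hHM ?_
        have : MulAut.conj ((x : G) * g) • H = MulAut.conj (x : G) • MulAut.conj g • H := by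
          rw [map_mul, mul_smul]
        rw [this]
        exact Subgroup.conj_smul_le_of_le hgHM x
      exact M.mul_mem (M.inv_mem x.2) (hsub hkmem)
    · have : MulAut.conj ((x : G)⁻¹ * k) • H = MulAut.conj (x : G)⁻¹ • MulAut.conj k • H := by
        rw [map_mul, mul_smul]
      rw [this, hk, map_mul, mul_smul, ← mul_smul, ← map_mul, inv_mul_cancel, map_one, one_smul]
end

section
/- Let G be a finite group, H and M subgroups of G with H ≤ M. Suppose H contains a Sylow p-subgroup S of G, N_G(S) ≤ M, and H is pronormal in M. Then H is pronormal in G. -/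
open Pointwise

theorem pronormal_of_pronormal_in_overgroup_of_sylow_normalizer
    {G : Type*} [Group G] [Finite G] (H M : Subgroup G) (hHM : H ≤ M)
    {p : ℕ} (hp : p.Prime) (S : Sylow p G) (hSH : (S : Subgroup G) ≤ H)
    (hNM : Subgroup.normalizer ((S : Subgroup G) : Set G) ≤ M)
    (h : Pronormal (H.subgroupOf M)) : Pronormal H := by
  haveI : Fact p.Prime := ⟨hp⟩
  intro g
  set L : Subgroup G := H ⊔ MulAut.conj g • H with hL
  have hHL : H ≤ L := le_sup_left
  have hgHL : MulAut.conj g • H ≤ L := le_sup_right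
  have hSL : (S : Subgroup G) ≤ L := hSH.trans hHL
  have hgSL : ((g • S : Sylow p G) : Subgroup G) ≤ L := by
    rw [Sylow.coe_subgroup_smul]
    rintro - ⟨s, hs, rfl⟩
    exact hgHL ⟨s, hSH hs, rfl⟩
  obtain ⟨x, hx⟩ := MulAction.exists_smul_eq L ((g • S).subtype hgSL) (S.subtype hSL)
  rw [Sylow.smul_subtype] at hx
  have hxg : (↑x * g) • S = S := by
    have h1 : (↑x : G) • g • S = S := Sylow.subtype_injective hx
    rwa [smul_smul] at h1
  have hm : ↑x * g ∈ M := hNM (Sylow.smul_eq_iff_mem_normalizer.mp hxg)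
  have hconjm : MulAut.conj (↑x * g) • H = MulAut.conj (x : G) • (MulAut.conj g • H) := by
    rw [map_mul, mul_smul]
  have hmL : MulAut.conj (↑x * g) • H ≤ L := by
    rw [hconjm]
    exact Subgroup.conj_smul_le_of_le hgHL x
  obtain ⟨k, hk1, hk2⟩ := h ⟨↑x * g, hm⟩
  rw [Subgroup.conj_smul_subgroupOf hHM] at hk1 hk2
  -- extract the conjugation equality in G
  have hk2' : MulAut.conj (k : G) • H = MulAut.conj (↑x * g) • H := by
    have hmap := congrArg (Subgroup.map M.subtype) hk2
    rw [Subgroup.conj_smul_subgroupOf hHM, Subgroup.subgroupOf_map_subtype,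
      Subgroup.subgroupOf_map_subtype,
      inf_eq_left.mpr (Subgroup.conj_smul_le_of_le hHM k),
      inf_eq_left.mpr (Subgroup.conj_smul_le_of_le hHM ⟨↑x * g, hm⟩)] at hmap
    exact hmap
  -- extract the membership in G
  have hk1' : (k : G) ∈ H ⊔ MulAut.conj (↑x * g) • H := by
    have : (k : G) ∈ (H.subgroupOf M ⊔ (MulAut.conj (↑x * g) • H).subgroupOf M).map
        M.subtype := ⟨k, hk1, rfl⟩
    rw [Subgroup.map_sup, Subgroup.subgroupOf_map_subtype, Subgroup.subgroupOf_map_subtype,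
      inf_eq_left.mpr hHM,
      inf_eq_left.mpr ((Subgroup.conj_smul_le_of_le hHM ⟨↑x * g, hm⟩).trans
        (le_refl M))] at this
    exact this
  have hkL : (k : G) ∈ L := sup_le hHL hmL hk1'
  refine ⟨(↑x)⁻¹ * ↑k, mul_mem (inv_mem x.2) hkL, ?_⟩
  rw [map_mul, mul_smul, hk2', hconjm, map_inv, inv_smul_smul]
end

section
/- Let V be a normal subgroup of a finite group G and H a pronormal subgroup of G. Then for every H-invariant subgroup U of V, one has U = N_U(H)·[H, U]. -/
open Pointwise

private lemma conj_smul_eq_of_mem_normalizer {G : Type*} [Group G] {H : Subgroup G} {g : G}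
    (hg : g ∈ Subgroup.normalizer (H : Set G)) : MulAut.conj g • H = H := by
  rw [Subgroup.mem_normalizer_iff] at hg
  ext x
  rw [Subgroup.mem_pointwise_smul_iff_inv_smul_mem]
  simp only [map_inv, MulAut.smul_def, MulAut.conj_inv_apply]
  have := hg (g⁻¹ * x * g)
  simpa [mul_assoc] using this

private lemma mem_normalizer_of_conj_smul_eq {G : Type*} [Group G] {H : Subgroup G} {g : G}
    (hg : MulAut.conj g • H = H) : g ∈ Subgroup.normalizer (H : Set G) := by
  rw [Subgroup.mem_normalizer_iff]
  intro x
  have := Subgroup.smul_mem_pointwise_smul_iff (a := MulAut.conj g) (S := H) (x := x)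
  rw [hg] at this
  simpa [MulAut.smul_def] using this.symm

private lemma smul_mem_of_conj_smul_eq {G : Type*} [Group G] {K : Subgroup G} {h : G}
    (hh : MulAut.conj h • K = K) {c : G} (hc : c ∈ K) : h * c * h⁻¹ ∈ K := by
  rw [← hh, Subgroup.mem_pointwise_smul_iff_inv_smul_mem]
  simp only [map_inv, MulAut.smul_def, MulAut.conj_inv_apply]
  simpa [mul_assoc] using hc

private lemma mem_sup_of_normalizes {G : Type*} [Group G] {H K : Subgroup G}
    (hn : ∀ h ∈ H, MulAut.conj h • K = K) {x : G} (hx : x ∈ H ⊔ K) :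
    ∃ h ∈ H, ∃ c ∈ K, x = h * c := by
  have hconj : ∀ h ∈ H, ∀ c ∈ K, h * c * h⁻¹ ∈ K := fun h hh c hc =>
    smul_mem_of_conj_smul_eq (hn h hh) hc
  let S : Subgroup G :=
    { carrier := {x | ∃ h ∈ H, ∃ c ∈ K, x = h * c}
      one_mem' := ⟨1, H.one_mem, 1, K.one_mem, (mul_one 1).symm⟩
      mul_mem' := by
        rintro a b ⟨h, hh, c, hc, rfl⟩ ⟨h', hh', c', hc', rfl⟩
        refine ⟨h * h', H.mul_mem hh hh', (h'⁻¹ * c * h'⁻¹⁻¹) * c',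
          K.mul_mem (hconj h'⁻¹ (H.inv_mem hh') c hc) hc', ?_⟩
        group
      inv_mem' := by
        rintro a ⟨h, hh, c, hc, rfl⟩
        refine ⟨h⁻¹, H.inv_mem hh, h * c⁻¹ * h⁻¹, hconj h hh c⁻¹ (K.inv_mem hc), ?_⟩
        group }
  have hHS : H ≤ S := fun h hh => ⟨h, hh, 1, K.one_mem, (mul_one h).symm⟩
  have hKS : K ≤ S := fun c hc => ⟨1, H.one_mem, c, hc, (one_mul c).symm⟩
  exact sup_le hHS hKS hx

theorem eq_normalizer_mul_commutator_of_pronormal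
    {G : Type*} [Group G] [Finite G] (V : Subgroup G) [V.Normal]
    (H : Subgroup G) (hH : Pronormal H)
    (U : Subgroup G) (hUV : U ≤ V) (hUinv : ∀ h ∈ H, MulAut.conj h • U = U) :
    (U : Set G) = ((U ⊓ Subgroup.normalizer (H : Set G) : Subgroup G) : Set G) * ((⁅H, U⁆ : Subgroup G) : Set G) := by
  set K : Subgroup G := ⁅H, U⁆ with hK
  -- K ≤ U
  have hKU : K ≤ U := by
    rw [hK, Subgroup.commutator_le]
    intro h hh u hu
    exact U.mul_mem (smul_mem_of_conj_smul_eq (hUinv h hh) hu) (U.inv_mem hu)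
  -- H normalizes K
  have hHK : ∀ h ∈ H, MulAut.conj h • K = K := by
    intro h hh
    rw [hK, Subgroup.pointwise_smul_def, Subgroup.map_commutator (f := (MulDistribMulAction.toMonoidEnd (MulAut G) G (MulAut.conj h) : G →* G)),
      ← Subgroup.pointwise_smul_def, ← Subgroup.pointwise_smul_def,
      conj_smul_eq_of_mem_normalizer (Subgroup.le_normalizer hh), hUinv h hh]
  apply subset_antisymm
  · intro u hu
    obtain ⟨k, hk, hkconj⟩ := hH u
    -- k ∈ H ⊔ K
    have hkHK : k ∈ H ⊔ K := by
      have hle : H ⊔ MulAut.conj u • H ≤ H ⊔ K := by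
        refine sup_le le_sup_left ?_
        intro x hx
        rw [Subgroup.mem_pointwise_smul_iff_inv_smul_mem] at hx
        simp only [map_inv, MulAut.smul_def, MulAut.conj_inv_apply] at hx
        open scoped commutatorElement in
        have hxe : x = ⁅u, u⁻¹ * x * u⁆ * (u⁻¹ * x * u) := by group
        rw [hxe]
        exact Subgroup.mul_mem _
          (Subgroup.mem_sup_right (by
            rw [hK, Subgroup.commutator_comm]
            exact Subgroup.commutator_mem_commutator hu hx))
          (Subgroup.mem_sup_left hx)
      exact hle hk
    obtain ⟨h, hh, c, hc, rfl⟩ := mem_sup_of_normalizes hHK hkHK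
    -- n := (h*c)⁻¹ * u is in the normalizer of H
    have h1 : MulAut.conj ((h * c)⁻¹ * u) • H = H := by
      rw [map_mul, mul_smul, ← hkconj, ← mul_smul, ← map_mul, inv_mul_cancel, map_one, one_smul]
    have hn : (h * c)⁻¹ * u ∈ Subgroup.normalizer (H : Set G) := mem_normalizer_of_conj_smul_eq h1
    set m : G := h * ((h * c)⁻¹ * u) with hm
    have hmU : m ∈ U := by
      have : m = (h * c⁻¹ * h⁻¹) * u := by rw [hm]; group
      rw [this]
      exact U.mul_mem (smul_mem_of_conj_smul_eq (hUinv h hh) (U.inv_mem (hKU hc))) hu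
    have hmN : m ∈ Subgroup.normalizer (H : Set G) := (Subgroup.normalizer (H : Set G)).mul_mem (Subgroup.le_normalizer hh) hn
    -- m⁻¹ normalizes K
    have hmK : MulAut.conj m⁻¹ • K = K := by
      rw [hK, Subgroup.pointwise_smul_def, Subgroup.map_commutator (f := (MulDistribMulAction.toMonoidEnd (MulAut G) G (MulAut.conj m⁻¹) : G →* G)),
        ← Subgroup.pointwise_smul_def, ← Subgroup.pointwise_smul_def,
        conj_smul_eq_of_mem_normalizer ((Subgroup.normalizer (H : Set G)).inv_mem hmN),
        conj_smul_eq_of_mem_normalizer (Subgroup.le_normalizer (U.inv_mem hmU))]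
    have hc' : m⁻¹ * (h * c * h⁻¹) * m⁻¹⁻¹ ∈ K :=
      smul_mem_of_conj_smul_eq hmK (smul_mem_of_conj_smul_eq (hHK h hh) hc)
    refine ⟨m, ⟨hmU, hmN⟩, m⁻¹ * (h * c * h⁻¹) * m⁻¹⁻¹, hc', ?_⟩
    rw [hm]; group
  · rintro x ⟨a, ha, b, hb, rfl⟩
    exact U.mul_mem (Set.mem_of_mem_inter_left ha) (hKU hb)
end

section
/- Let G be a finite group with an abelian normal subgroup V and a subgroup H such that G = HV. Then H is pronormal in G if and only if U = N_U(H)·[H, U] for every H-invariant subgroup U of V. -/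
open Pointwise
open scoped commutatorElement

section Aux
variable {G : Type*} [Group G]

theorem conjSmul_mul (a b : G) (S : Subgroup G) :
    MulAut.conj (a * b) • S = MulAut.conj a • (MulAut.conj b • S) := by
  rw [map_mul, mul_smul]

theorem mem_conjSmul {a x : G} {S : Subgroup G} :
    x ∈ MulAut.conj a • S ↔ a⁻¹ * x * a ∈ S := by
  rw [Subgroup.mem_pointwise_smul_iff_inv_smul_mem, ← map_inv, MulAut.smul_def, MulAut.conj_apply,
    inv_inv]

theorem conjSmul_eq_iff_mem_normalizer {n : G} {H : Subgroup G} :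
    MulAut.conj n • H = H ↔ n ∈ (Subgroup.normalizer (H : Set G)) := by
  rw [Subgroup.mem_normalizer_iff]
  constructor
  · intro hEq x
    conv_rhs => rw [← hEq, mem_conjSmul]
    constructor
    · intro hx; convert hx using 2; group
    · intro hx; convert hx using 1; group
  · intro hn
    ext x
    rw [mem_conjSmul, hn (n⁻¹ * x * n)]
    have : n * (n⁻¹ * x * n) * n⁻¹ = x := by group
    rw [this]

theorem conjSmul_self {h : G} {H : Subgroup G} (hh : h ∈ H) :
    MulAut.conj h • H = H :=
  conjSmul_eq_iff_mem_normalizer.mpr (Subgroup.le_normalizer hh)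

theorem smul_commutator (a : MulAut G) (H U : Subgroup G) :
    a • ⁅H, U⁆ = ⁅a • H, a • U⁆ := by
  simp only [Subgroup.pointwise_smul_def]
  exact Subgroup.map_commutator H U _

end Aux

theorem pronormal_iff_eq_normalizer_mul_commutator
    {G : Type*} [Group G] [Finite G] (V : Subgroup G) [V.Normal]
    (hab : ∀ x ∈ V, ∀ y ∈ V, x * y = y * x)
    (H : Subgroup G) (hGHV : (H : Set G) * (V : Set G) = Set.univ) :
    Pronormal H ↔
      ∀ U : Subgroup G, U ≤ V → (∀ h ∈ H, MulAut.conj h • U = U) →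
        (U : Set G) = ((U ⊓ Subgroup.normalizer (H : Set G) : Subgroup G) : Set G) * ((⁅H, U⁆ : Subgroup G) : Set G) := by
  constructor
  · -- Pronormal → decomposition
    intro hpro U hUV hUinv
    set W : Subgroup G := ⁅H, U⁆ with hWdef
    have hWU : W ≤ U := by
      rw [hWdef, Subgroup.commutator_le]
      intro h hh u hu
      have h1 : h * u * h⁻¹ ∈ U := by
        rw [← hUinv h hh, mem_conjSmul]
        have e : h⁻¹ * (h * u * h⁻¹) * h = u := by group
        rw [e]; exact hu
      have e : ⁅h, u⁆ = (h * u * h⁻¹) * u⁻¹ := by group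
      rw [e]; exact U.mul_mem h1 (U.inv_mem hu)
    have hWinv : ∀ h ∈ H, MulAut.conj h • W = W := by
      intro h hh
      rw [hWdef, smul_commutator, conjSmul_self hh, hUinv h hh]
    have hWconj : ∀ h ∈ H, ∀ w ∈ W, h * w * h⁻¹ ∈ W := by
      intro h hh w hw
      rw [← hWinv h hh, mem_conjSmul]
      have e : h⁻¹ * (h * w * h⁻¹) * h = w := by group
      rw [e]; exact hw
    apply Set.Subset.antisymm
    · intro u hu
      obtain ⟨k, hkD, hkeq⟩ := hpro u
      let P : Subgroup G :=
        { carrier := (H : Set G) * (W : Set G)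
          one_mem' := ⟨1, H.one_mem, 1, W.one_mem, mul_one 1⟩
          mul_mem' := by
            rintro a b ⟨h₁, hh₁, w₁, hw₁, rfl⟩ ⟨h₂, hh₂, w₂, hw₂, rfl⟩
            refine ⟨h₁ * h₂, H.mul_mem hh₁ hh₂, (h₂⁻¹ * w₁ * h₂) * w₂,
              W.mul_mem ?_ hw₂, by group⟩
            have := hWconj h₂⁻¹ (H.inv_mem hh₂) w₁ hw₁
            simpa using this
          inv_mem' := by
            rintro a ⟨h, hh, w, hw, rfl⟩
            exact ⟨h⁻¹, H.inv_mem hh, h * w⁻¹ * h⁻¹,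
              hWconj h hh w⁻¹ (W.inv_mem hw), by group⟩ }
      have hHP : H ≤ P := fun x hx => ⟨x, hx, 1, W.one_mem, mul_one x⟩
      have hDP : H ⊔ MulAut.conj u • H ≤ P := by
        refine sup_le hHP ?_
        intro x hx
        rw [mem_conjSmul] at hx
        refine ⟨u⁻¹ * x * u, hx, ⁅(u⁻¹ * x * u)⁻¹, u⁆,
          Subgroup.commutator_mem_commutator (H.inv_mem hx) hu, ?_⟩
        show (u⁻¹ * x * u) * ⁅(u⁻¹ * x * u)⁻¹, u⁆ = x
        rw [commutatorElement_def]; group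
      have hkP : k ∈ (H : Set G) * (W : Set G) := hDP hkD
      obtain ⟨h, hh, w, hw, hk0⟩ := hkP
      have hk : h * w = k := hk0
      have e1 : MulAut.conj (h * w) • H = MulAut.conj u • H := by rw [hk]; exact hkeq
      have e2 : MulAut.conj (u⁻¹ * (h * w)) • H = H := by
        rw [conjSmul_mul, e1, ← conjSmul_mul, inv_mul_cancel]
        simp
      have hm : u⁻¹ * (h * w) ∈ (Subgroup.normalizer (H : Set G)) := conjSmul_eq_iff_mem_normalizer.mp e2
      set n₀ : G := h⁻¹ * (u⁻¹ * (h * w)) with hn₀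
      have hn₀N : n₀ ∈ (Subgroup.normalizer (H : Set G)) :=
        (Subgroup.normalizer (H : Set G)).mul_mem (Subgroup.le_normalizer (H.inv_mem hh)) hm
      have hu' : h⁻¹ * u * h ∈ U := by
        rw [← hUinv h⁻¹ (H.inv_mem hh), mem_conjSmul]
        have e : h⁻¹⁻¹ * (h⁻¹ * u * h) * h⁻¹ = u := by group
        rw [e]; exact hu
      have hn₀U : n₀ ∈ U := by
        have e : n₀ = (h⁻¹ * u * h)⁻¹ * w := by rw [hn₀]; group
        rw [e]; exact U.mul_mem (U.inv_mem hu') (hWU hw)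
      refine ⟨h * n₀⁻¹ * h⁻¹, ?_, h * w * h⁻¹, hWconj h hh w hw, ?_⟩
      · refine Subgroup.mem_inf.mpr ⟨?_, ?_⟩
        · rw [← hUinv h hh, mem_conjSmul]
          have e : h⁻¹ * (h * n₀⁻¹ * h⁻¹) * h = n₀⁻¹ := by group
          rw [e]; exact U.inv_mem hn₀U
        · exact (Subgroup.normalizer (H : Set G)).mul_mem
            ((Subgroup.normalizer (H : Set G)).mul_mem (Subgroup.le_normalizer hh) ((Subgroup.normalizer (H : Set G)).inv_mem hn₀N))
            ((Subgroup.normalizer (H : Set G)).inv_mem (Subgroup.le_normalizer hh))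
      · have hswap : n₀⁻¹ * w = w * n₀⁻¹ :=
          hab n₀⁻¹ (V.inv_mem (hUV hn₀U)) w (hUV (hWU hw))
        have e : (h * n₀⁻¹ * h⁻¹) * (h * w * h⁻¹) = h * (n₀⁻¹ * w) * h⁻¹ := by group
        show (h * n₀⁻¹ * h⁻¹) * (h * w * h⁻¹) = u
        rw [e, hswap, hn₀]; group
    · rintro x ⟨n, hn, w, hw, rfl⟩
      exact U.mul_mem (Subgroup.mem_inf.mp hn).1 (hWU hw)
  · -- decomposition → Pronormal
    intro hcond g
    have hg : g⁻¹ ∈ (H : Set G) * (V : Set G) := by rw [hGHV]; exact Set.mem_univ _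
    obtain ⟨h₀, hh₀, v₀, hv₀, hhv0⟩ := hg
    have hhv : h₀ * v₀ = g⁻¹ := hhv0
    have hgvh : g = v₀⁻¹ * h₀⁻¹ := by rw [← mul_inv_rev, hhv, inv_inv]
    set v : G := v₀⁻¹ with hvdef
    have hv : v ∈ V := V.inv_mem hv₀
    have hgH : MulAut.conj g • H = MulAut.conj v • H := by
      rw [hgvh, conjSmul_mul, conjSmul_self (H.inv_mem hh₀)]
    set S : Set G := {x | ∃ h ∈ H, h * v * h⁻¹ = x} with hSdef
    set U : Subgroup G := Subgroup.closure S with hUdef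
    have hSV : S ⊆ (V : Set G) := by
      rintro x ⟨h, hh, rfl⟩
      exact (inferInstance : V.Normal).conj_mem v hv h
    have hUV' : U ≤ V := by rw [hUdef]; exact (Subgroup.closure_le _).mpr hSV
    have hSU : ∀ h ∈ H, h * v * h⁻¹ ∈ U := fun h hh => Subgroup.subset_closure ⟨h, hh, rfl⟩
    have hsmulS : ∀ h ∈ H, MulAut.conj h • U ≤ U := by
      intro h hh
      conv_lhs => rw [hUdef]
      rw [Subgroup.smul_closure]
      apply (Subgroup.closure_le _).mpr
      rintro x ⟨y, ⟨h', hh', rfl⟩, rfl⟩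
      have he : MulAut.conj h • (h' * v * h'⁻¹) = (h * h') * v * (h * h')⁻¹ := by
        rw [MulAut.smul_def, MulAut.conj_apply]; group
      show MulAut.conj h • (h' * v * h'⁻¹) ∈ (U : Set G)
      rw [he]
      exact hSU (h * h') (H.mul_mem hh hh')
    have hUinv : ∀ h ∈ H, MulAut.conj h • U = U := by
      intro h hh
      refine le_antisymm (hsmulS h hh) ?_
      rw [Subgroup.subset_pointwise_smul_iff, ← map_inv]
      exact hsmulS h⁻¹ (H.inv_mem hh)
    have hdecomp := hcond U hUV' hUinv
    have hvU : v ∈ U := by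
      have := hSU 1 H.one_mem
      simpa using this
    have hvmem : v ∈ ((U ⊓ (Subgroup.normalizer (H : Set G)) : Subgroup G) : Set G) *
        ((⁅H, U⁆ : Subgroup G) : Set G) := by
      rw [← hdecomp]; exact hvU
    obtain ⟨n, hn, w, hw, hnw0⟩ := hvmem
    have hnw : n * w = v := hnw0
    have hbase : ∀ a ∈ H, a * v * a⁻¹ * v⁻¹ ∈ H ⊔ MulAut.conj g • H := by
      intro a ha
      have e : a * v * a⁻¹ * v⁻¹ = a * (v * a⁻¹ * v⁻¹) := by group
      rw [e]
      refine Subgroup.mul_mem _ (Subgroup.mem_sup_left ha) (Subgroup.mem_sup_right ?_)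
      rw [hgH, mem_conjSmul]
      have e2 : v⁻¹ * (v * a⁻¹ * v⁻¹) * v = a⁻¹ := by group
      rw [e2]; exact H.inv_mem ha
    let T : Subgroup G :=
      { carrier := {x | x ∈ V ∧ ∀ a ∈ H, a * x * a⁻¹ * x⁻¹ ∈ H ⊔ MulAut.conj g • H}
        one_mem' := by
          refine ⟨V.one_mem, ?_⟩
          intro a ha
          have e : a * 1 * a⁻¹ * 1⁻¹ = 1 := by group
          rw [e]; exact Subgroup.one_mem _
        mul_mem' := by
          rintro x y ⟨hxV, hx⟩ ⟨hyV, hy⟩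
          refine ⟨V.mul_mem hxV hyV, ?_⟩
          intro a ha
          have hBV : a * y * a⁻¹ * y⁻¹ ∈ V :=
            V.mul_mem ((inferInstance : V.Normal).conj_mem y hyV a) (V.inv_mem hyV)
          have hc : x * (a * y * a⁻¹ * y⁻¹) = (a * y * a⁻¹ * y⁻¹) * x := hab x hxV _ hBV
          have e : a * (x * y) * a⁻¹ * (x * y)⁻¹ =
              (a * x * a⁻¹ * x⁻¹) * (x * (a * y * a⁻¹ * y⁻¹) * x⁻¹) := by group
          have e2 : x * (a * y * a⁻¹ * y⁻¹) * x⁻¹ = a * y * a⁻¹ * y⁻¹ := by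
            rw [hc]; group
          rw [e, e2]
          exact Subgroup.mul_mem _ (hx a ha) (hy a ha)
        inv_mem' := by
          rintro x ⟨hxV, hx⟩
          refine ⟨V.inv_mem hxV, ?_⟩
          intro a ha
          have hq : a * x⁻¹ * a⁻¹ ∈ V := (inferInstance : V.Normal).conj_mem x⁻¹ (V.inv_mem hxV) a
          have hc : (a * x⁻¹ * a⁻¹) * x = x * (a * x⁻¹ * a⁻¹) := hab _ hq x hxV
          have he : a * x⁻¹ * a⁻¹ * x⁻¹⁻¹ = x * (a * x⁻¹ * a⁻¹) := by rw [← hc]; group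
          have he2 : x * (a * x⁻¹ * a⁻¹) = (a * x * a⁻¹ * x⁻¹)⁻¹ := by group
          rw [he, he2]
          exact Subgroup.inv_mem _ (hx a ha) }
    have hUT : U ≤ T := by
      rw [hUdef]
      apply (Subgroup.closure_le _).mpr
      rintro x ⟨h', hh', rfl⟩
      refine ⟨hSV ⟨h', hh', rfl⟩, ?_⟩
      intro a ha
      have e : a * (h' * v * h'⁻¹) * a⁻¹ * (h' * v * h'⁻¹)⁻¹ =
          ((a * h') * v * (a * h')⁻¹ * v⁻¹) * (h' * v * h'⁻¹ * v⁻¹)⁻¹ := by group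
      rw [e]
      exact Subgroup.mul_mem _ (hbase (a * h') (H.mul_mem ha hh'))
        (Subgroup.inv_mem _ (hbase h' hh'))
    have hcommD : (⁅H, U⁆ : Subgroup G) ≤ H ⊔ MulAut.conj g • H := by
      rw [Subgroup.commutator_le]
      intro a ha u hu
      have := (hUT hu).2 a ha
      rw [commutatorElement_def]
      exact this
    have hWV : (⁅H, U⁆ : Subgroup G) ≤ V := by
      rw [Subgroup.commutator_le]
      intro a ha u hu
      rw [commutatorElement_def]
      exact V.mul_mem ((inferInstance : V.Normal).conj_mem u (hUV' hu) a) (V.inv_mem (hUV' hu))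
    have hnN : n ∈ (Subgroup.normalizer (H : Set G)) := (Subgroup.mem_inf.mp hn).2
    have hnV : n ∈ V := hUV' (Subgroup.mem_inf.mp hn).1
    have hswap : n * w = w * n := hab n hnV w (hWV hw)
    refine ⟨w, hcommD hw, ?_⟩
    rw [hgH, ← hnw, hswap, conjSmul_mul, conjSmul_eq_iff_mem_normalizer.mpr hnN]
end

section
/- Let G be a finite group, N a normal subgroup of G, and H a subgroup of G with N ≤ H. If H/N is pronormal in G/N, then H is pronormal in G. -/
open Pointwise

lemma map_conj_smul {G Q : Type*} [Group G] [Group Q] (f : G →* Q) (g : G) (H : Subgroup G) :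
    (MulAut.conj g • H).map f = MulAut.conj (f g) • H.map f := by
  rw [Subgroup.pointwise_smul_def, Subgroup.pointwise_smul_def]
  ext x
  simp

theorem pronormal_of_pronormal_map_quotient
    {G : Type*} [Group G] [Finite G] (N : Subgroup G) [N.Normal]
    (H : Subgroup G) (hNH : N ≤ H)
    (h : Pronormal (H.map (QuotientGroup.mk' N))) : Pronormal H := by
  intro g
  set π := QuotientGroup.mk' N
  obtain ⟨kb, hkmem, hkeq⟩ := h (π g)
  rw [← map_conj_smul, ← Subgroup.map_sup] at hkmem
  obtain ⟨k, hk, rfl⟩ := hkmem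
  refine ⟨k, hk, ?_⟩
  have hmapeq : (MulAut.conj k • H).map π = (MulAut.conj g • H).map π := by
    rw [map_conj_smul, map_conj_smul, hkeq]
  have hN : ∀ x : G, N ≤ MulAut.conj x • H := fun x => by
    calc N = MulAut.conj x • N := (Subgroup.Normal.conj_smul_eq_self x N).symm
    _ ≤ MulAut.conj x • H := by
      rw [Subgroup.pointwise_smul_le_pointwise_smul_iff]; exact hNH
  have := congrArg (Subgroup.comap π) hmapeq
  rwa [Subgroup.comap_map_eq, Subgroup.comap_map_eq, QuotientGroup.ker_mk',
    sup_of_le_left (hN k), sup_of_le_left (hN g)] at this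
end

section
/- In the group H = (C₇ ⋊ C₃) × (C₇ ⋊ C₃) (the direct product of two copies of the Frobenius group of order 21), the diagonal subgroup D = {(x, x) : x ∈ C₇} of the normal subgroup C₇ × C₇ is not pronormal in H, even though D has odd index in H. -/
open Pointwise

theorem diagonal_not_pronormal_in_frobenius21_squared
    {K : Type*} [Group K] [Fintype K] (hcard : Fintype.card K = 21)
    (hnab : ∃ a b : K, a * b ≠ b * a) (P : Sylow 7 K) :
    Odd (Subgroup.map ((MonoidHom.id K).prod (MonoidHom.id K)) (P : Subgroup K)).index ∧
      ¬ Pronormal (Subgroup.map ((MonoidHom.id K).prod (MonoidHom.id K)) (P : Subgroup K)) := by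
  haveI : Fact (Nat.Prime 7) := ⟨by norm_num⟩
  haveI : Fact (Nat.Prime 3) := ⟨by norm_num⟩
  set f := (MonoidHom.id K).prod (MonoidHom.id K) with hf
  have hfapp : ∀ x : K, f x = (x, x) := fun x => rfl
  have hfinj : Function.Injective f := fun x y h => congrArg Prod.fst h
  have hK : Nat.card K = 21 := by rw [Nat.card_eq_fintype_card, hcard]
  -- card of P is 7
  have hfact : (Nat.factorization 21) 7 = 1 := by
    rw [show (21 : ℕ) = 3 * 7 from rfl,
      Nat.factorization_mul (by norm_num) (by norm_num)]
    rw [Nat.Prime.factorization (by norm_num), Nat.Prime.factorization (by norm_num)]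
    simp
  have cardP : Nat.card (P : Subgroup K) = 7 := by
    rw [Sylow.card_eq_multiplicity, hK, hfact, pow_one]
  -- index of P is 3
  have hindex : (P : Subgroup K).index = 3 := by
    have := Subgroup.index_mul_card (P : Subgroup K)
    rw [cardP, hK] at this
    omega
  -- P is normal
  have hone : Nat.card (Sylow 7 K) = 1 := by
    have hd : Nat.card (Sylow 7 K) ∣ 3 := hindex ▸ Sylow.card_dvd_index P
    have hm := card_sylow_modEq_one 7 K
    rcases (Nat.prime_three).eq_one_or_self_of_dvd _ hd with h | h
    · exact h
    · rw [h] at hm; exact absurd hm (by decide)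
  haveI : Subsingleton (Sylow 7 K) :=
    (Nat.card_eq_one_iff_unique.mp hone).1
  have hnormal : (P : Subgroup K).Normal := by
    rw [← Subgroup.normalizer_eq_top_iff]
    rw [eq_top_iff]
    intro g _
    exact Sylow.smul_eq_iff_mem_normalizer.mp (Subsingleton.elim _ _)
  -- elements of P commute
  haveI hcyc : IsCyclic (P : Subgroup K) := isCyclic_of_prime_card cardP
  have hcomm : ∀ x y : K, x ∈ (P : Subgroup K) → y ∈ (P : Subgroup K) → x * y = y * x := by
    intro x y hx hy
    letI := hcyc.commGroup
    exact Subtype.ext_iff.mp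
      (mul_comm (⟨x, hx⟩ : (P : Subgroup K)) (⟨y, hy⟩ : (P : Subgroup K)))
  -- there is a conjugation moving something in P
  have hexist : ∃ c x : K, x ∈ (P : Subgroup K) ∧ c * x * c⁻¹ ≠ x := by
    by_contra h
    push_neg at h
    have hcen : (P : Subgroup K) ≤ Subgroup.center K := by
      intro x hx
      rw [Subgroup.mem_center_iff]
      intro g
      have := h g x hx
      calc g * x = g * x * g⁻¹ * g := by group
        _ = x * g := by rw [this]
    haveI : IsCyclic (K ⧸ (P : Subgroup K)) := by
      apply isCyclic_of_prime_card (p := 3)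
      rw [← Subgroup.index_eq_card, hindex]
    obtain ⟨a, b, hab⟩ := hnab
    exact hab (commutative_of_cyclic_center_quotient (QuotientGroup.mk' (P : Subgroup K))
      (by rwa [QuotientGroup.ker_mk']) a b)
  obtain ⟨c, x, hx, hne⟩ := hexist
  set D := Subgroup.map f (P : Subgroup K) with hD
  constructor
  · -- odd index
    have hcardD : Nat.card D = 7 := by
      rw [← cardP]
      exact (Nat.card_congr ((P : Subgroup K).equivMapOfInjective f hfinj).toEquiv).symm
    have := Subgroup.index_mul_card D
    rw [hcardD, Nat.card_prod, hK] at this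
    have h63 : D.index = 63 := by omega
    rw [h63]
    exact ⟨31, by norm_num⟩
  · -- not pronormal
    intro hpro
    obtain ⟨k, hk, hconj⟩ := hpro (c, 1)
    set g : K × K := (c, 1) with hg
    -- D and conj g • D are inside P.prod P
    have hDle : D ≤ (P : Subgroup K).prod (P : Subgroup K) := by
      rintro z ⟨y, hy, rfl⟩
      exact Subgroup.mem_prod.mpr ⟨hy, hy⟩
    have hgDle : MulAut.conj g • D ≤ (P : Subgroup K).prod (P : Subgroup K) := by
      intro z hz
      rw [Subgroup.mem_smul_pointwise_iff_exists] at hz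
      obtain ⟨d, hd, rfl⟩ := hz
      obtain ⟨y, hy, rfl⟩ := hd
      refine Subgroup.mem_prod.mpr ⟨?_, ?_⟩
      · exact hnormal.conj_mem y hy c
      · simp [hg, hfapp]; exact hy
    have hkP : k ∈ (P : Subgroup K).prod (P : Subgroup K) :=
      (sup_le hDle hgDle) hk
    obtain ⟨hk1, hk2⟩ := Subgroup.mem_prod.mp hkP
    -- k centralizes D, so conj k • D = D
    have hfix : ∀ d ∈ D, k * d * k⁻¹ = d := by
      rintro d ⟨y, hy, rfl⟩
      have h1 : k.1 * y = y * k.1 := hcomm _ _ hk1 hy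
      have h2 : k.2 * y = y * k.2 := hcomm _ _ hk2 hy
      have : k * f y = f y * k := Prod.ext h1 h2
      rw [this, mul_inv_cancel_right]
    have hkD : MulAut.conj k • D = D := by
      apply le_antisymm
      · intro z hz
        rw [Subgroup.mem_smul_pointwise_iff_exists] at hz
        obtain ⟨d, hd, rfl⟩ := hz
        have : MulAut.conj k • d = d := hfix d hd
        rw [this]
        exact hd
      · intro d hd
        rw [Subgroup.mem_smul_pointwise_iff_exists]
        exact ⟨d, hd, hfix d hd⟩
    rw [hkD] at hconj
    -- but (c x c⁻¹, x) ∈ conj g • D and not in D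
    have hmem : ((c * x * c⁻¹, x) : K × K) ∈ MulAut.conj g • D := by
      rw [Subgroup.mem_smul_pointwise_iff_exists]
      refine ⟨f x, ⟨x, hx, rfl⟩, ?_⟩
      show g * f x * g⁻¹ = _
      rw [hfapp]
      simp [hg, Prod.ext_iff]
    rw [← hconj] at hmem
    obtain ⟨y, _, hyeq⟩ := hmem
    rw [hfapp] at hyeq
    have h1 : y = c * x * c⁻¹ := congrArg Prod.fst hyeq
    have h2 : y = x := congrArg Prod.snd hyeq
    exact hne (by rw [← h1, h2])
end
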